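/- Let q, r : ℝ → ℝ be three times differentiable functions satisfying the stationary AKNS equations (1/4)q'''(x) - (3/2)q(x)r(x)q'(x) = 0 and (1/4)r'''(x) - (3/2)q(x)r(x)r'(x) = 0 for all x. Then the functions h₀ = -(1/16)q''r'' + (1/8)qr²q'' + (1/8)q²r r'' + (1/8)qr q'r' - (1/16)q²(r')² - (1/16)r²(q')² - (1/4)q³r³, h₁ = (1/8)q'r'' - (1/8)r'q'', and h₂ = -(1/4)q r'' - (1/4)r q'' + (1/4)q'r' + (3/4)q²r² (all evaluated at x) are constant in x. -/

import Mathlib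

private lemma const_of_hasDerivAt_zero (f : ℝ → ℝ) (h : ∀ x, HasDerivAt f 0 x) :
    ∀ x y : ℝ, f x = f y := fun x y =>
  is_const_of_deriv_eq_zero (fun z => (h z).differentiableAt)
    (fun z => (h z).deriv) x y

/-- For solutions of the stationary AKNS equations `(1/4)q''' - (3/2)qrq' = 0`,
`(1/4)r''' - (3/2)qrr' = 0`, the three quantities `h₀`, `h₁`, `h₂` (the
coefficients of the spectral curve for n = 3) are constants of motion. -/
theorem stationary_n3_integrals (q r : ℝ → ℝ)
    (hq : Differentiable ℝ q) (hq' : Differentiable ℝ (deriv q))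
    (hq'' : Differentiable ℝ (deriv (deriv q)))
    (hr : Differentiable ℝ r) (hr' : Differentiable ℝ (deriv r))
    (hr'' : Differentiable ℝ (deriv (deriv r)))
    (heq1 : ∀ x, 1 / 4 * deriv (deriv (deriv q)) x - 3 / 2 * q x * r x * deriv q x = 0)
    (heq2 : ∀ x, 1 / 4 * deriv (deriv (deriv r)) x - 3 / 2 * q x * r x * deriv r x = 0) :
    let h₀ : ℝ → ℝ := fun x =>
      -(1 / 16) * deriv (deriv q) x * deriv (deriv r) x
        + 1 / 8 * q x * (r x) ^ 2 * deriv (deriv q) x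
        + 1 / 8 * (q x) ^ 2 * r x * deriv (deriv r) x
        + 1 / 8 * q x * r x * deriv q x * deriv r x
        - 1 / 16 * (q x) ^ 2 * (deriv r x) ^ 2
        - 1 / 16 * (r x) ^ 2 * (deriv q x) ^ 2
        - 1 / 4 * (q x) ^ 3 * (r x) ^ 3
    let h₁ : ℝ → ℝ := fun x =>
      1 / 8 * deriv q x * deriv (deriv r) x - 1 / 8 * deriv r x * deriv (deriv q) x
    let h₂ : ℝ → ℝ := fun x =>
      -(1 / 4) * q x * deriv (deriv r) x - 1 / 4 * r x * deriv (deriv q) x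
        + 1 / 4 * deriv q x * deriv r x + 3 / 4 * (q x) ^ 2 * (r x) ^ 2
    (∀ x y : ℝ, h₀ x = h₀ y) ∧ (∀ x y : ℝ, h₁ x = h₁ y) ∧ (∀ x y : ℝ, h₂ x = h₂ y) := by
  intro h₀ h₁ h₂
  have Hq : ∀ x, HasDerivAt q (deriv q x) x := fun x => (hq x).hasDerivAt
  have Hr : ∀ x, HasDerivAt r (deriv r x) x := fun x => (hr x).hasDerivAt
  have Hq1 : ∀ x, HasDerivAt (deriv q) (deriv (deriv q) x) x := fun x => (hq' x).hasDerivAt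
  have Hr1 : ∀ x, HasDerivAt (deriv r) (deriv (deriv r) x) x := fun x => (hr' x).hasDerivAt
  have Hq2 : ∀ x, HasDerivAt (deriv (deriv q)) (6 * q x * r x * deriv q x) x := by
    intro x
    have h := (hq'' x).hasDerivAt
    have e : deriv (deriv (deriv q)) x = 6 * q x * r x * deriv q x := by
      have := heq1 x; linarith
    rwa [e] at h
  have Hr2 : ∀ x, HasDerivAt (deriv (deriv r)) (6 * q x * r x * deriv r x) x := by
    intro x
    have h := (hr'' x).hasDerivAt
    have e : deriv (deriv (deriv r)) x = 6 * q x * r x * deriv r x := by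
      have := heq2 x; linarith
    rwa [e] at h
  refine ⟨const_of_hasDerivAt_zero _ ?_, const_of_hasDerivAt_zero _ ?_,
    const_of_hasDerivAt_zero _ ?_⟩
  · intro x
    have t1 := ((Hq2 x).const_mul (-(1/16 : ℝ))).mul (Hr2 x)
    have t2 := (((Hq x).const_mul (1/8 : ℝ)).mul ((Hr x).pow 2)).mul (Hq2 x)
    have t3 := ((((Hq x).pow 2).const_mul (1/8 : ℝ)).mul (Hr x)).mul (Hr2 x)
    have t4 := ((((Hq x).const_mul (1/8 : ℝ)).mul (Hr x)).mul (Hq1 x)).mul (Hr1 x)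
    have t5 := (((Hq x).pow 2).const_mul (1/16 : ℝ)).mul ((Hr1 x).pow 2)
    have t6 := (((Hr x).pow 2).const_mul (1/16 : ℝ)).mul ((Hq1 x).pow 2)
    have t7 := (((Hq x).pow 3).const_mul (1/4 : ℝ)).mul ((Hr x).pow 3)
    have H := ((((((t1.add t2).add t3).add t4).sub t5).sub t6).sub t7)
    convert H using 1
    · rfl
    · rfl
    · funext y
      simp only [h₀, Pi.mul_apply, Pi.add_apply, Pi.sub_apply, Pi.pow_apply]
    · simp only [Pi.mul_apply, Pi.pow_apply, Nat.cast_ofNat]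
      ring
  · intro x
    have H := (((Hq1 x).const_mul (1/8 : ℝ)).mul (Hr2 x)).sub
      (((Hr1 x).const_mul (1/8 : ℝ)).mul (Hq2 x))
    convert H using 1
    · rfl
    · rfl
    · funext y
      simp only [h₁, Pi.mul_apply, Pi.add_apply, Pi.sub_apply, Pi.pow_apply]
    · ring
  · intro x
    have H := (((((Hq x).const_mul (-(1/4 : ℝ))).mul (Hr2 x)).sub
      (((Hr x).const_mul (1/4 : ℝ)).mul (Hq2 x))).add
      (((Hq1 x).const_mul (1/4 : ℝ)).mul (Hr1 x))).add
      ((((Hq x).pow 2).const_mul (3/4 : ℝ)).mul ((Hr x).pow 2))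
    convert H using 1
    · rfl
    · rfl
    · funext y
      simp only [h₂, Pi.mul_apply, Pi.add_apply, Pi.sub_apply, Pi.pow_apply]
    · simp only [Pi.mul_apply, Pi.pow_apply, Nat.cast_ofNat]
      ring
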